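/- Let n ≥ 1, let Z be a subset of Euclidean n-space (EuclideanSpace ℝ (Fin n)), and let p be a point. Then the image of Z \ {p} under the radial projection x ↦ (x − p)/‖x − p‖ has Hausdorff dimension at most the Hausdorff dimension of Z. -/

import Mathlib

/-- The radial projection `x ↦ ‖x‖⁻¹ • x` is Lipschitz with constant `2/ε` on
the region `‖x‖ ≥ ε`. -/
lemma radial_lipschitz_aux {E : Type*} [NormedAddCommGroup E] [NormedSpace ℝ E]
    {a b : E} {ε : ℝ} (hε : 0 < ε) (ha : ε ≤ ‖a‖) (hb : ε ≤ ‖b‖) :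
    ‖‖a‖⁻¹ • a - ‖b‖⁻¹ • b‖ ≤ 2 / ε * ‖a - b‖ := by
  have ha0 : (0:ℝ) < ‖a‖ := lt_of_lt_of_le hε ha
  have hb0 : (0:ℝ) < ‖b‖ := lt_of_lt_of_le hε hb
  have key : ‖a‖⁻¹ • a - ‖b‖⁻¹ • b = ‖a‖⁻¹ • (a - b) + (‖a‖⁻¹ - ‖b‖⁻¹) • b := by
    rw [smul_sub, sub_smul]; abel
  rw [key]
  have h1 : |‖b‖ - ‖a‖| ≤ ‖a - b‖ := by
    rw [abs_sub_comm]; exact abs_norm_sub_norm_le a b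
  have t1 : ‖a‖⁻¹ * ‖a - b‖ ≤ ‖a - b‖ / ε := by
    rw [div_eq_mul_inv, mul_comm (‖a - b‖)]
    exact mul_le_mul_of_nonneg_right (inv_anti₀ hε ha) (norm_nonneg (a - b))
  have h2 : |‖a‖⁻¹ - ‖b‖⁻¹| * ‖b‖ = |‖b‖ - ‖a‖| / ‖a‖ := by
    rw [inv_sub_inv ha0.ne' hb0.ne', abs_div, abs_of_pos (mul_pos ha0 hb0)]
    field_simp
  have t2 : |‖a‖⁻¹ - ‖b‖⁻¹| * ‖b‖ ≤ ‖a - b‖ / ε := by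
    rw [h2]; exact div_le_div₀ (norm_nonneg (a - b)) h1 hε ha
  calc ‖‖a‖⁻¹ • (a - b) + (‖a‖⁻¹ - ‖b‖⁻¹) • b‖
      ≤ ‖‖a‖⁻¹ • (a - b)‖ + ‖(‖a‖⁻¹ - ‖b‖⁻¹) • b‖ := norm_add_le _ _
    _ = ‖a‖⁻¹ * ‖a - b‖ + |‖a‖⁻¹ - ‖b‖⁻¹| * ‖b‖ := by
        rw [norm_smul, norm_smul, Real.norm_eq_abs, Real.norm_eq_abs,
          abs_of_pos (inv_pos.2 ha0)]
    _ ≤ ‖a - b‖ / ε + ‖a - b‖ / ε := add_le_add t1 t2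
    _ = 2 / ε * ‖a - b‖ := by ring

/-- The image of Z \ {p} under the radial projection x ↦ (x − p)/‖x − p‖ has
Hausdorff dimension at most that of Z. -/
theorem dimH_radial_projection_le (n : ℕ) (hn : 1 ≤ n)
    (Z : Set (EuclideanSpace ℝ (Fin n))) (p : EuclideanSpace ℝ (Fin n)) :
    dimH ((fun x : EuclideanSpace ℝ (Fin n) => ‖x - p‖⁻¹ • (x - p)) '' (Z \ {p}))
      ≤ dimH Z := by
  set f : EuclideanSpace ℝ (Fin n) → EuclideanSpace ℝ (Fin n) :=
    fun x => ‖x - p‖⁻¹ • (x - p) with hf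
  set S : ℕ → Set (EuclideanSpace ℝ (Fin n)) :=
    fun k => (Z \ {p}) ∩ {x | (1:ℝ)/(k+1) ≤ ‖x - p‖} with hS
  have hcover : Z \ {p} = ⋃ k, S k := by
    ext x
    simp only [hS, Set.mem_iUnion, Set.mem_inter_iff, Set.mem_setOf_eq]
    constructor
    · intro hx
      have hx0 : (0:ℝ) < ‖x - p‖ := by
        rw [norm_pos_iff, sub_ne_zero]
        exact fun h => hx.2 (by simp [h])
      obtain ⟨k, hk⟩ := exists_nat_one_div_lt hx0
      exact ⟨k, hx, hk.le⟩
    · rintro ⟨k, hk, -⟩; exact hk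
  rw [hcover, Set.image_iUnion, dimH_iUnion]
  refine iSup_le fun k => ?_
  have hε : (0:ℝ) < 1/(k+1) := by positivity
  have hlip : LipschitzOnWith ⟨2/(1/(k+1)), by positivity⟩ f (S k) := by
    intro a ha b hb
    rw [edist_dist, edist_dist, dist_eq_norm, dist_eq_norm]
    erw [← ENNReal.ofReal_coe_nnreal, ← ENNReal.ofReal_mul (NNReal.coe_nonneg _)]
    apply ENNReal.ofReal_le_ofReal
    show ‖f a - f b‖ ≤ 2/(1/((k:ℝ)+1)) * ‖a - b‖
    simpa [hf, sub_sub_sub_cancel_right] using radial_lipschitz_aux hε ha.2 hb.2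
  exact le_trans (hlip.dimH_image_le) (dimH_mono (fun x hx => hx.1.1))
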